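/- Let G be a finite simple graph on vertex set {1,…,n} admitting a perfect elimination ordering (i.e., G is chordal), and let L ⊆ K[x_1,…,x_n] be the ideal generated by all squarefree monomials x_{i_1} x_{i_2} x_{i_3} with 1 ≤ i_1 < i_2 < i_3 ≤ n for which there exists t < 3 such that {i_t, i_ℓ} ∉ E(G) for all t < ℓ ≤ 3 (i.e., either {i_1,i_2} ∉ E(G) and {i_1,i_3} ∉ E(G), or {i_2,i_3} ∉ E(G)). Then L is a vertex splittable ideal; in particular L has linear quotients. (L is the first homological shift ideal HS_1(I(G^c)) of the edge ideal of the complement of G.) -/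

import Mathlib

open MvPolynomial

/-- The set of exponent vectors of the minimal monomial generators of a monomial ideal `I`:
monomials in `I` which stay outside `I` after dividing by any variable. -/
def minGen {K : Type*} [Field K] {n : ℕ} (I : Ideal (MvPolynomial (Fin n) K)) :
    Set (Fin n →₀ ℕ) :=
  {a | (monomial a (1 : K)) ∈ I ∧
    ∀ i : Fin n, a i ≠ 0 → (monomial (a - Finsupp.single i 1) (1 : K)) ∉ I}

/-- Vertex splittable monomial ideals in the polynomial ring on the set `V` of variables:
the zero ideal, the unit ideal and principal monomial ideals are vertex splittable, and if
`I = x·I₁ + I₂` with `x ∈ V`, `I₁, I₂` vertex splittable ideals in the variables `V ∖ {x}`,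
`I₂ ⊆ I₁` and `G(I)` the disjoint union of `G(x·I₁)` and `G(I₂)`, then `I` is vertex
splittable. -/
inductive VertexSplittable {K : Type*} [Field K] {n : ℕ} :
    Set (Fin n) → Ideal (MvPolynomial (Fin n) K) → Prop
  | top (V : Set (Fin n)) : VertexSplittable V ⊤
  | bot (V : Set (Fin n)) : VertexSplittable V ⊥
  | principal (V : Set (Fin n)) (a : Fin n →₀ ℕ) (ha : ∀ i, a i ≠ 0 → i ∈ V) :
      VertexSplittable V (Ideal.span {monomial a 1})
  | split (V : Set (Fin n)) (x : Fin n) (hx : x ∈ V)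
      (I₁ I₂ : Ideal (MvPolynomial (Fin n) K))
      (h₁ : VertexSplittable (V \ {x}) I₁) (h₂ : VertexSplittable (V \ {x}) I₂)
      (hsub : I₂ ≤ I₁)
      (hdisj : Disjoint (minGen (Ideal.span {MvPolynomial.X x} * I₁)) (minGen I₂))
      (hunion : minGen (Ideal.span {MvPolynomial.X x} * I₁) ∪ minGen I₂ =
        minGen (Ideal.span {MvPolynomial.X x} * I₁ + I₂)) :
      VertexSplittable V (Ideal.span {MvPolynomial.X x} * I₁ + I₂)

/-- A monomial ideal has linear quotients: for some ordering `w_1, …, w_m` of its minimal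
monomial generators, each colon ideal `(w_1, …, w_{j-1}) : w_j` is generated by variables. -/
def HasLinearQuotients {K : Type*} [Field K] {n : ℕ}
    (I : Ideal (MvPolynomial (Fin n) K)) : Prop :=
  ∃ (m : ℕ) (w : Fin m → (Fin n →₀ ℕ)), Function.Injective w ∧ Set.range w = minGen I ∧
    ∀ j : Fin m, ∃ T : Set (Fin n),
      Submodule.colon
        (Ideal.span {p : MvPolynomial (Fin n) K | ∃ i, i < j ∧ p = monomial (w i) 1})
        (Ideal.span {(monomial (w j) (1 : K))})
      = Ideal.span (MvPolynomial.X '' T)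

section Infra
variable {K : Type*} [Field K] {n : ℕ}

/-- span of monomials with exponents in `S` -/
noncomputable def msp (K : Type*) [Field K] {n : ℕ} (S : Set (Fin n →₀ ℕ)) : Ideal (MvPolynomial (Fin n) K) :=
  Ideal.span ((fun a => monomial a (1:K)) '' S)

noncomputable abbrev ee {n : ℕ} (i : Fin n) : Fin n →₀ ℕ := Finsupp.single i 1

lemma mem_msp {p : MvPolynomial (Fin n) K} {S : Set (Fin n →₀ ℕ)} :
    p ∈ msp K S ↔ ∀ c ∈ p.support, ∃ a ∈ S, a ≤ c :=
  mem_ideal_span_monomial_image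

lemma monomial_mem_msp {b : Fin n →₀ ℕ} {S : Set (Fin n →₀ ℕ)} :
    monomial b (1:K) ∈ msp K S ↔ ∃ a ∈ S, a ≤ b := by
  classical
  rw [mem_msp, support_monomial]
  simp [(one_ne_zero : (1:K) ≠ 0)]

lemma msp_union (S T : Set (Fin n →₀ ℕ)) : msp K (S ∪ T) = msp K S + msp K T := by
  rw [msp, Set.image_union, Ideal.span_union]; rfl

lemma msp_empty : msp K (∅ : Set (Fin n →₀ ℕ)) = ⊥ := by
  rw [msp, Set.image_empty, Ideal.span_empty]

lemma msp_zero : msp K ({0} : Set (Fin n →₀ ℕ)) = ⊤ := by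
  rw [msp, Set.image_singleton, monomial_zero', C_1, Ideal.span_singleton_one]

lemma msp_le_msp {S T : Set (Fin n →₀ ℕ)} (h : ∀ b ∈ T, ∃ a ∈ S, a ≤ b) :
    msp K T ≤ msp K S := by
  rw [msp, Ideal.span_le]
  rintro p ⟨b, hb, rfl⟩
  exact monomial_mem_msp.mpr (h b hb)

lemma X_mul_msp (x : Fin n) (S : Set (Fin n →₀ ℕ)) :
    Ideal.span {(X x : MvPolynomial (Fin n) K)} * msp K S = msp K ((fun a => ee x + a) '' S) := by
  rw [msp, msp, Ideal.span_mul_span]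
  congr 1
  ext p
  simp only [Set.mem_singleton_iff, Set.mem_iUnion, Set.mem_image]
  constructor
  · rintro ⟨s, rfl, t, ⟨a, ha, rfl⟩, hp⟩
    refine ⟨ee x + a, ⟨a, ha, rfl⟩, ?_⟩
    simpa [X, monomial_mul] using hp
  · rintro ⟨b, ⟨a, ha, rfl⟩, rfl⟩
    exact ⟨X x, rfl, monomial a 1, ⟨a, ha, rfl⟩, by simp [X, monomial_mul]⟩

/-- degree of an exponent vector -/
def dg {n : ℕ} (a : Fin n →₀ ℕ) : ℕ := a.sum fun _ k => k

lemma dg_add (a b : Fin n →₀ ℕ) : dg (a + b) = dg a + dg b :=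
  Finsupp.sum_add_index' (fun _ => rfl) (fun _ _ _ => rfl)

lemma dg_single (i : Fin n) (k : ℕ) : dg (Finsupp.single i k) = k :=
  Finsupp.sum_single_index rfl

lemma dg_eq_zero {a : Fin n →₀ ℕ} (h : dg a = 0) : a = 0 := by
  ext i
  by_contra hi
  have : i ∈ a.support := Finsupp.mem_support_iff.mpr hi
  have := Finset.sum_eq_zero_iff.mp h i this
  exact hi this

lemma eq_of_le_of_dg {a b : Fin n →₀ ℕ} (hle : a ≤ b) (h : dg a = dg b) : a = b := by
  obtain ⟨c, rfl⟩ := le_iff_exists_add.mp hle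
  rw [dg_add, left_eq_add] at h
  rw [dg_eq_zero h, add_zero]

/-- sets of uniform degree are antichains -/
lemma antichain_of_dg {S : Set (Fin n →₀ ℕ)} {d : ℕ} (h : ∀ a ∈ S, dg a = d) :
    ∀ a ∈ S, ∀ b ∈ S, a ≤ b → a = b := fun a ha b hb hle =>
  eq_of_le_of_dg hle ((h a ha).trans (h b hb).symm)


lemma monomial_mem_of_le {I : Ideal (MvPolynomial (Fin n) K)} {a b : Fin n →₀ ℕ}
    (ha : monomial a (1:K) ∈ I) (hab : a ≤ b) : monomial b (1:K) ∈ I := by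
  have : monomial b (1:K) = monomial (b - a) (1:K) * monomial a (1:K) := by
    rw [monomial_mul, one_mul, tsub_add_cancel_of_le hab]
  rw [this]
  exact Ideal.mul_mem_left _ _ ha

lemma minGen_antichain {I : Ideal (MvPolynomial (Fin n) K)} :
    ∀ a ∈ minGen I, ∀ b ∈ minGen I, a ≤ b → a = b := by
  rintro a ⟨haI, _⟩ b ⟨_, hbmin⟩ hab
  by_contra hne
  obtain ⟨i, hi⟩ : ∃ i, a i < b i := by
    by_contra h
    push_neg at h
    exact hne (le_antisymm hab h)
  refine hbmin i (by omega) (monomial_mem_of_le haI ?_)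
  intro j
  rw [Finsupp.tsub_apply]
  rcases eq_or_ne j i with rfl | hj
  · simp only [Finsupp.single_eq_same]; omega
  · rw [Finsupp.single_eq_of_ne' (Ne.symm hj)]
    exact le_trans (hab j) (by omega)

lemma minGen_msp {S : Set (Fin n →₀ ℕ)} (hS : ∀ a ∈ S, ∀ b ∈ S, a ≤ b → a = b) :
    minGen (msp K S) = S := by
  ext b
  constructor
  · rintro ⟨hbI, hbmin⟩
    obtain ⟨a, haS, hab⟩ := monomial_mem_msp.mp hbI
    rcases eq_or_ne a b with rfl | hne
    · exact haS
    obtain ⟨i, hi⟩ : ∃ i, a i < b i := by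
      by_contra h
      push_neg at h
      exact hne (le_antisymm hab h)
    exfalso
    refine hbmin i (by omega) (monomial_mem_msp.mpr ⟨a, haS, ?_⟩)
    intro j
    rw [Finsupp.tsub_apply]
    rcases eq_or_ne j i with rfl | hj
    · simp only [Finsupp.single_eq_same]; omega
    · rw [Finsupp.single_eq_of_ne' (Ne.symm hj)]
      exact le_trans (hab j) (by omega)
  · intro hbS
    refine ⟨monomial_mem_msp.mpr ⟨b, hbS, le_refl b⟩, fun i hi hmem => ?_⟩
    obtain ⟨a, haS, hab⟩ := monomial_mem_msp.mp hmem
    have h1 : a ≤ b := le_trans hab tsub_le_self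
    have h2 : a = b := hS a haS b hbS h1
    subst h2
    have := hab i
    rw [Finsupp.tsub_apply, Finsupp.single_eq_same] at this
    omega

lemma colon_msp (S : Set (Fin n →₀ ℕ)) (u : Fin n →₀ ℕ) :
    Submodule.colon (msp K S) (Ideal.span {monomial u (1:K)}) = msp K ((· - u) '' S) := by
  ext r
  rw [← Ideal.submodule_span_eq, Submodule.mem_colon_span_singleton, smul_eq_mul, mem_msp, mem_msp]
  constructor
  · intro h c hc
    have hcm : c + u ∈ (r * monomial u (1:K)).support := by
      rw [mem_support_iff, coeff_mul_monomial' (c + u) u 1 r]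
      simp only [le_add_iff_nonneg_left, zero_le, if_true, add_tsub_cancel_right, mul_one]
      exact mem_support_iff.mp hc
    obtain ⟨a, haS, hle⟩ := h _ hcm
    exact ⟨a - u, ⟨a, haS, rfl⟩, tsub_le_iff_right.mpr hle⟩
  · intro h c hc
    rw [mem_support_iff, coeff_mul_monomial' c u 1 r] at hc
    by_cases hu : u ≤ c
    · rw [if_pos hu, mul_one] at hc
      obtain ⟨b, ⟨a, haS, rfl⟩, hle⟩ := h _ (mem_support_iff.mpr hc)
      refine ⟨a, haS, ?_⟩
      calc a ≤ (a - u) + u := le_tsub_add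
        _ ≤ (c - u) + u := add_le_add_left hle u
        _ = c := tsub_add_cancel_of_le hu
    · rw [if_neg hu] at hc; exact absurd rfl hc

lemma prefix_span_eq_msp {m : ℕ} (w : Fin m → (Fin n →₀ ℕ)) (j : Fin m) :
    Ideal.span {p : MvPolynomial (Fin n) K | ∃ i, i < j ∧ p = monomial (w i) 1}
      = msp K {a | ∃ i, i < j ∧ a = w i} := by
  rw [msp]
  congr 1
  ext p
  constructor
  · rintro ⟨i, hij, rfl⟩; exact ⟨w i, ⟨i, hij, rfl⟩, rfl⟩
  · rintro ⟨a, ⟨i, hij, rfl⟩, rfl⟩; exact ⟨i, hij, rfl⟩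

lemma VS_mono {V W : Set (Fin n)} {I : Ideal (MvPolynomial (Fin n) K)}
    (h : VertexSplittable V I) (hVW : V ⊆ W) : VertexSplittable W I := by
  induction h generalizing W with
  | top V => exact VertexSplittable.top W
  | bot V => exact VertexSplittable.bot W
  | principal V a ha => exact VertexSplittable.principal W a (fun i hi => hVW (ha i hi))
  | split V x hx I₁ I₂ h₁ h₂ hsub hdisj hunion ih₁ ih₂ =>
    exact VertexSplittable.split W x (hVW hx) I₁ I₂
      (ih₁ (Set.diff_subset_diff_left hVW)) (ih₂ (Set.diff_subset_diff_left hVW))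
      hsub hdisj hunion

lemma minGen_top : minGen (⊤ : Ideal (MvPolynomial (Fin n) K)) = {0} := by
  have : (⊤ : Ideal (MvPolynomial (Fin n) K)) = msp K {0} := msp_zero.symm
  rw [this, minGen_msp]
  rintro a rfl b rfl _
  rfl

lemma minGen_bot : minGen (⊥ : Ideal (MvPolynomial (Fin n) K)) = ∅ := by
  ext a
  simp only [Set.mem_empty_iff_false, iff_false, minGen, Set.mem_setOf_eq, Ideal.mem_bot]
  rintro ⟨h, -⟩
  exact (one_ne_zero : (1:K) ≠ 0) (monomial_eq_zero.mp h)

lemma minGen_principal (a : Fin n →₀ ℕ) :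
    minGen (Ideal.span {monomial a (1:K)}) = {a} := by
  have : Ideal.span {monomial a (1:K)} = msp K {a} := by rw [msp, Set.image_singleton]
  rw [this, minGen_msp]
  rintro c rfl b rfl _
  rfl

lemma colon_bot (u : Fin n →₀ ℕ) :
    Submodule.colon (⊥ : Ideal (MvPolynomial (Fin n) K)) (Ideal.span {monomial u (1:K)})
      = Ideal.span (X '' (∅ : Set (Fin n))) := by
  rw [← msp_empty, colon_msp, Set.image_empty, Set.image_empty, Ideal.span_empty, msp_empty]

lemma shift_sub (x : Fin n) (a b : Fin n →₀ ℕ) : (ee x + a) - (ee x + b) = a - b := by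
  ext i
  simp only [Finsupp.tsub_apply, Finsupp.add_apply]
  omega

lemma le_of_shift_le {x : Fin n} {a b : Fin n →₀ ℕ} (h : ee x + a ≤ ee x + b) : a ≤ b := by
  intro i
  have := h i
  simp only [Finsupp.add_apply] at this
  omega

lemma span_X_eq_msp (x : Fin n) :
    Ideal.span {(X x : MvPolynomial (Fin n) K)} = msp K {ee x} := by
  rw [msp, Set.image_singleton]
  rfl

lemma hlq_singleton {I : Ideal (MvPolynomial (Fin n) K)} (a : Fin n →₀ ℕ)
    (h : minGen I = {a}) : HasLinearQuotients I := by
  refine ⟨1, fun _ => a, fun i j _ => Subsingleton.elim i j, by rw [h]; exact Set.range_const, ?_⟩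
  intro j
  refine ⟨∅, ?_⟩
  have : {p : MvPolynomial (Fin n) K | ∃ i, i < j ∧ p = monomial a 1} = ∅ := by
    ext p
    simp only [Set.mem_setOf_eq, Set.mem_empty_iff_false, iff_false, not_exists]
    intro i ⟨hij, _⟩
    exact absurd hij (by omega)
  rw [this, Ideal.span_empty, colon_bot]

lemma hlq_empty {I : Ideal (MvPolynomial (Fin n) K)} (h : minGen I = ∅) :
    HasLinearQuotients I := by
  refine ⟨0, Fin.elim0, fun i => i.elim0, by rw [h, Set.range_eq_empty], fun j => j.elim0⟩

theorem vs_hlq {V : Set (Fin n)} {I : Ideal (MvPolynomial (Fin n) K)}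
    (h : VertexSplittable V I) :
    I = msp K (minGen I) ∧ (∀ a ∈ minGen I, ∀ i, a i ≠ 0 → i ∈ V) ∧ HasLinearQuotients I := by
  induction h with
  | top V =>
    refine ⟨by rw [minGen_top, msp_zero], ?_, hlq_singleton 0 minGen_top⟩
    rw [minGen_top]
    rintro a rfl i hi
    simp at hi
  | bot V =>
    exact ⟨by rw [minGen_bot, msp_empty], by rw [minGen_bot]; rintro a ⟨⟩,
      hlq_empty minGen_bot⟩
  | principal V a ha =>
    refine ⟨?_, ?_, hlq_singleton a (minGen_principal a)⟩
    · rw [minGen_principal, msp, Set.image_singleton]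
    · rw [minGen_principal]
      rintro b rfl
      exact ha
  | split V x hx I₁ I₂ h₁ h₂ hsub hdisj hunion ih₁ ih₂ =>
    obtain ⟨hI₁, hsupp₁, m₁, w₁, hinj₁, hrng₁, hcol₁⟩ := ih₁
    obtain ⟨hI₂, hsupp₂, m₂, w₂, hinj₂, hrng₂, hcol₂⟩ := ih₂
    have hx1 : ∀ a ∈ minGen I₁, a x = 0 := by
      intro a ha
      by_contra hax
      exact (hsupp₁ a ha x hax).2 rfl
    have hx2 : ∀ a ∈ minGen I₂, a x = 0 := by
      intro a ha
      by_contra hax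
      exact (hsupp₂ a ha x hax).2 rfl
    set S₁ := minGen I₁ with hS₁def
    set S₂ := minGen I₂ with hS₂def
    have key1 : Ideal.span {(X x : MvPolynomial (Fin n) K)} * I₁
        = msp K ((fun a => ee x + a) '' S₁) := by
      conv_lhs => rw [hI₁]
      exact X_mul_msp x S₁
    have hant : ∀ a ∈ (fun a => ee x + a) '' S₁, ∀ b ∈ (fun a => ee x + a) '' S₁,
        a ≤ b → a = b := by
      rintro _ ⟨a₁, ha₁, rfl⟩ _ ⟨b₁, hb₁, rfl⟩ hle
      rw [minGen_antichain a₁ ha₁ b₁ hb₁ (le_of_shift_le hle)]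
    have key2 : minGen (Ideal.span {(X x : MvPolynomial (Fin n) K)} * I₁)
        = (fun a => ee x + a) '' S₁ := by
      rw [key1, minGen_msp hant]
    have keyI : Ideal.span {(X x : MvPolynomial (Fin n) K)} * I₁ + I₂
        = msp K (((fun a => ee x + a) '' S₁) ∪ S₂) := by
      rw [msp_union, key1]
      congr 1
    have keyMG : minGen (Ideal.span {(X x : MvPolynomial (Fin n) K)} * I₁ + I₂)
        = ((fun a => ee x + a) '' S₁) ∪ S₂ := by
      rw [← hunion, key2]
    refine ⟨by rw [keyMG]; exact keyI, ?_, ?_⟩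
    · rw [keyMG]
      rintro a (⟨a₁, ha₁, rfl⟩ | haS₂)
      · intro i hi
        rcases eq_or_ne i x with rfl | hix
        · exact hx
        · rw [Finsupp.add_apply, Finsupp.single_eq_of_ne' (Ne.symm hix), zero_add] at hi
          exact (hsupp₁ a₁ ha₁ i hi).1
      · exact fun i hi => (hsupp₂ a haS₂ i hi).1
    -- HasLinearQuotients
    · set w : Fin (m₁ + m₂) → (Fin n →₀ ℕ) := fun j => if h : (j : ℕ) < m₁
        then ee x + w₁ ⟨j, h⟩ else w₂ ⟨(j : ℕ) - m₁, by omega⟩ with hw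
      have hwpos : ∀ (j : Fin (m₁ + m₂)) (h : (j : ℕ) < m₁), w j = ee x + w₁ ⟨j, h⟩ :=
        fun j h => dif_pos h
      have hwneg : ∀ (j : Fin (m₁ + m₂)) (h : ¬ (j : ℕ) < m₁),
          w j = w₂ ⟨(j : ℕ) - m₁, by omega⟩ := fun j h => dif_neg h
      have hmem₁ : ∀ i : Fin m₁, w₁ i ∈ S₁ := fun i => hrng₁ ▸ Set.mem_range_self _
      have hmem₂ : ∀ i : Fin m₂, w₂ i ∈ S₂ := fun i => hrng₂ ▸ Set.mem_range_self _
      refine ⟨m₁ + m₂, w, ?_, ?_, ?_⟩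
      · -- injective
        intro j j' hjj
        by_cases hj : (j : ℕ) < m₁ <;> by_cases hj' : (j' : ℕ) < m₁
        · rw [hwpos j hj, hwpos j' hj'] at hjj
          have h5 := congrArg Fin.val (hinj₁ (add_left_cancel hjj))
          simp only at h5
          exact Fin.ext h5
        · exfalso
          rw [hwpos j hj, hwneg j' hj'] at hjj
          have h6 := DFunLike.congr_fun hjj x
          rw [Finsupp.add_apply, Finsupp.single_eq_same, hx1 _ (hmem₁ _), hx2 _ (hmem₂ _)] at h6
          omega
        · exfalso
          rw [hwneg j hj, hwpos j' hj'] at hjj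
          have h6 := DFunLike.congr_fun hjj x
          rw [Finsupp.add_apply, Finsupp.single_eq_same, hx1 _ (hmem₁ _), hx2 _ (hmem₂ _)] at h6
          omega
        · rw [hwneg j hj, hwneg j' hj'] at hjj
          have h5 := congrArg Fin.val (hinj₂ hjj)
          simp only at h5
          exact Fin.ext (by omega)
      · -- range
        rw [keyMG]
        ext a
        simp only [Set.mem_range, Set.mem_union]
        constructor
        · rintro ⟨j, rfl⟩
          by_cases hj : (j : ℕ) < m₁
          · rw [hwpos j hj]
            exact Or.inl ⟨w₁ ⟨j, hj⟩, hmem₁ _, rfl⟩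
          · rw [hwneg j hj]
            exact Or.inr (hmem₂ _)
        · rintro (⟨a₁, ha₁, rfl⟩ | ha₂)
          · obtain ⟨i, rfl⟩ := hrng₁.symm ▸ ha₁
            exact ⟨⟨(i : ℕ), by omega⟩, hwpos ⟨(i : ℕ), by omega⟩ (by exact i.isLt)⟩
          · obtain ⟨i, rfl⟩ := hrng₂.symm ▸ ha₂
            refine ⟨⟨m₁ + (i : ℕ), by omega⟩, ?_⟩
            rw [hwneg ⟨m₁ + (i : ℕ), by omega⟩ (by simp)]
            exact congrArg w₂ (Fin.ext (by simp))
      · -- colon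
        intro j
        by_cases hj : (j : ℕ) < m₁
        · obtain ⟨T, hT⟩ := hcol₁ ⟨j, hj⟩
          refine ⟨T, ?_⟩
          have hset : {a | ∃ i, i < j ∧ a = w i}
              = (fun a => ee x + a) '' {a | ∃ i, i < ⟨j, hj⟩ ∧ a = w₁ i} := by
            ext a
            simp only [Set.mem_setOf_eq, Set.mem_image]
            constructor
            · rintro ⟨i, hij, rfl⟩
              have hi : (i : ℕ) < m₁ := lt_trans hij hj
              rw [hwpos i hi]
              exact ⟨w₁ ⟨i, hi⟩, ⟨⟨i, hi⟩, hij, rfl⟩, rfl⟩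
            · rintro ⟨_, ⟨i₁, hi₁j, rfl⟩, rfl⟩
              refine ⟨⟨(i₁ : ℕ), by omega⟩, hi₁j, ?_⟩
              rw [hwpos ⟨(i₁ : ℕ), by omega⟩ (by exact i₁.isLt)]
          rw [prefix_span_eq_msp, hset, hwpos j hj, colon_msp, Set.image_image]
          have himg : (fun a => ee x + a - (ee x + w₁ ⟨j, hj⟩)) '' {a | ∃ i, i < ⟨j, hj⟩ ∧ a = w₁ i}
              = (· - w₁ ⟨j, hj⟩) '' {a | ∃ i, i < ⟨j, hj⟩ ∧ a = w₁ i} :=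
            Set.image_congr fun a _ => shift_sub x a (w₁ ⟨j, hj⟩)
          rw [himg, ← colon_msp, ← prefix_span_eq_msp, hT]
        · set jj : Fin m₂ := ⟨(j : ℕ) - m₁, by omega⟩ with hjjdef
          obtain ⟨T₂, hT₂⟩ := hcol₂ jj
          refine ⟨{x} ∪ T₂, ?_⟩
          set u := w₂ jj with hudef
          have hset : {a | ∃ i, i < j ∧ a = w i}
              = ((fun a => ee x + a) '' S₁) ∪ {a | ∃ i, i < jj ∧ a = w₂ i} := by
            ext a
            simp only [Set.mem_setOf_eq, Set.mem_union, Set.mem_image]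
            constructor
            · rintro ⟨i, hij, rfl⟩
              by_cases hi : (i : ℕ) < m₁
              · rw [hwpos i hi]
                exact Or.inl ⟨w₁ ⟨i, hi⟩, hmem₁ _, rfl⟩
              · rw [hwneg i hi]
                refine Or.inr ⟨⟨(i : ℕ) - m₁, by omega⟩, ?_, rfl⟩
                have hij' : (i : ℕ) < (j : ℕ) := hij
                exact Fin.mk_lt_mk.mpr (by omega)
            · rintro (⟨a₁, ha₁, rfl⟩ | ⟨i₂, hi₂, rfl⟩)
              · obtain ⟨i₁, rfl⟩ := hrng₁.symm ▸ ha₁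
                refine ⟨⟨(i₁ : ℕ), by omega⟩, ?_, (hwpos ⟨(i₁ : ℕ), by omega⟩ i₁.isLt).symm⟩
                rw [Fin.lt_def]
                exact lt_of_lt_of_le i₁.isLt (Nat.not_lt.mp hj)
              · have hi₂' : (i₂ : ℕ) < (j : ℕ) - m₁ := hi₂
                refine ⟨⟨m₁ + (i₂ : ℕ), by omega⟩, by
                    rw [Fin.lt_def]; show m₁ + (i₂ : ℕ) < (j : ℕ); omega, ?_⟩
                rw [hwneg ⟨m₁ + (i₂ : ℕ), by omega⟩ (by simp)]
                exact congrArg w₂ (Fin.ext (by simp))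
          have hwj : w j = u := hwneg j hj
          rw [prefix_span_eq_msp, hset, hwj, colon_msp, Set.image_union, msp_union]
          have hu2 : u ∈ S₂ := hmem₂ jj
          obtain ⟨a₀, ha₀, hle₀⟩ : ∃ a₀ ∈ S₁, a₀ ≤ u := by
            have hu1 : monomial u (1:K) ∈ I₁ :=
              hsub ((hI₂ ▸ monomial_mem_msp.mpr ⟨u, hu2, le_refl u⟩))
            exact monomial_mem_msp.mp (hI₁ ▸ hu1)
          have hfirst : msp K ((· - u) '' ((fun a => ee x + a) '' S₁)) = msp K {ee x} := by
            apply le_antisymm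
            · apply msp_le_msp
              rintro b ⟨_, ⟨a₁, ha₁, rfl⟩, rfl⟩
              refine ⟨ee x, rfl, ?_⟩
              intro i
              rcases eq_or_ne i x with rfl | hix
              · simp only [Finsupp.tsub_apply, Finsupp.add_apply, Finsupp.single_eq_same]
                have := hx2 u hu2
                omega
              · simp [Finsupp.single_eq_of_ne' (Ne.symm hix)]
            · apply msp_le_msp
              rintro b rfl
              refine ⟨(ee x + a₀) - u, ⟨ee x + a₀, ⟨a₀, ha₀, rfl⟩, rfl⟩, le_of_eq ?_⟩
              ext i
              simp only [Finsupp.tsub_apply, Finsupp.add_apply]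
              rcases eq_or_ne i x with rfl | hix
              · rw [Finsupp.single_eq_same, hx1 _ ha₀, hx2 _ hu2]
                omega
              · rw [Finsupp.single_eq_of_ne' (Ne.symm hix)]
                have := hle₀ i
                omega
          rw [hfirst, ← colon_msp, ← prefix_span_eq_msp, hT₂]
          rw [Set.image_union, Set.image_singleton, Ideal.span_union, span_X_eq_msp]
          rfl

lemma minGen_msp_dg {S : Set (Fin n →₀ ℕ)} {d : ℕ} (h : ∀ a ∈ S, dg a = d) :
    minGen (msp K S) = S := minGen_msp (antichain_of_dg h)

/-- the workhorse split lemma, for monomial ideals with generators of uniform degrees -/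
lemma vs_split_msp {V : Set (Fin n)} {x : Fin n} (hx : x ∈ V)
    {S₁ S₂ : Set (Fin n →₀ ℕ)} {d : ℕ}
    (hd₁ : ∀ a ∈ S₁, dg a = d) (hd₂ : ∀ a ∈ S₂, dg a = d + 1)
    (hxf₂ : ∀ a ∈ S₂, a x = 0)
    (h₁ : VertexSplittable (V \ {x}) (msp K S₁))
    (h₂ : VertexSplittable (V \ {x}) (msp K S₂))
    (hsub : msp K S₂ ≤ msp K S₁) :
    VertexSplittable V (msp K (((fun a => ee x + a) '' S₁) ∪ S₂)) := by
  have hds : ∀ a ∈ (fun a => ee x + a) '' S₁, dg a = d + 1 := by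
    rintro _ ⟨a, ha, rfl⟩
    rw [dg_add, dg_single, hd₁ a ha, add_comm]
  have e1 : Ideal.span {(X x : MvPolynomial (Fin n) K)} * msp K S₁
      = msp K ((fun a => ee x + a) '' S₁) := X_mul_msp x S₁
  have mg1 : minGen (Ideal.span {(X x : MvPolynomial (Fin n) K)} * msp K S₁)
      = (fun a => ee x + a) '' S₁ := by rw [e1, minGen_msp_dg hds]
  have mg2 : minGen (msp K S₂) = S₂ := minGen_msp_dg hd₂
  have hdisj : Disjoint (minGen (Ideal.span {(X x : MvPolynomial (Fin n) K)} * msp K S₁))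
      (minGen (msp K S₂)) := by
    rw [mg1, mg2, Set.disjoint_left]
    rintro _ ⟨a, ha, rfl⟩ hmem
    have h7 := hxf₂ _ hmem
    rw [Finsupp.add_apply, Finsupp.single_eq_same] at h7
    omega
  have hunion : minGen (Ideal.span {(X x : MvPolynomial (Fin n) K)} * msp K S₁)
      ∪ minGen (msp K S₂)
      = minGen (Ideal.span {(X x : MvPolynomial (Fin n) K)} * msp K S₁ + msp K S₂) := by
    rw [mg1, mg2, e1, ← msp_union, minGen_msp_dg]
    rintro a (ha | ha)
    · exact hds a ha
    · exact hd₂ a ha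
  have hmain := VertexSplittable.split V x hx (msp K S₁) (msp K S₂) h₁ h₂ hsub hdisj hunion
  rwa [e1, ← msp_union] at hmain

/-- perfect elimination property for a list of vertices -/
def peoList (H : SimpleGraph (Fin n)) : List (Fin n) → Prop
  | [] => True
  | w :: rest => (∀ j ∈ rest, ∀ k ∈ rest, H.Adj w j → H.Adj w k → j ≠ k → H.Adj j k)
      ∧ peoList H rest

lemma vs_vars (p : Fin n → Prop) :
    ∀ (L : List (Fin n)), L.Nodup →
      VertexSplittable {i | i ∈ L} (msp K {a | ∃ j, j ∈ L ∧ p j ∧ a = ee j})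
  | [] => by
    intro _
    have : {a : Fin n →₀ ℕ | ∃ j, j ∈ ([] : List (Fin n)) ∧ p j ∧ a = ee j} = ∅ := by
      ext a; simp
    rw [this, msp_empty]
    exact VertexSplittable.bot _
  | w :: rest => by
    intro hnd
    rw [List.nodup_cons] at hnd
    obtain ⟨hw, hnd⟩ := hnd
    have ihsub : {i : Fin n | i ∈ rest} ⊆ {i : Fin n | i ∈ w :: rest} \ {w} := by
      intro i hi
      exact ⟨List.mem_cons_of_mem _ hi, fun he => hw (he ▸ hi)⟩
    by_cases hpw : p w
    · have hid : {a : Fin n →₀ ℕ | ∃ j, j ∈ w :: rest ∧ p j ∧ a = ee j}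
          = ((fun a => ee w + a) '' {0}) ∪ {a | ∃ j, j ∈ rest ∧ p j ∧ a = ee j} := by
        rw [Set.image_singleton, add_zero]
        ext a
        simp only [Set.mem_setOf_eq, Set.mem_union, Set.mem_singleton_iff, List.mem_cons]
        constructor
        · rintro ⟨j, (rfl | hj), hpj, rfl⟩
          · exact Or.inl rfl
          · exact Or.inr ⟨j, hj, hpj, rfl⟩
        · rintro (rfl | ⟨j, hj, hpj, rfl⟩)
          · exact ⟨w, Or.inl rfl, hpw, rfl⟩
          · exact ⟨j, Or.inr hj, hpj, rfl⟩
      rw [hid]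
      refine vs_split_msp List.mem_cons_self (d := 0) ?_ ?_ ?_ ?_ ?_ ?_
      · rintro a rfl; rfl
      · rintro a ⟨j, hj, _, rfl⟩
        exact dg_single j 1
      · rintro a ⟨j, hj, _, rfl⟩
        exact Finsupp.single_eq_of_ne' (fun he => hw (he ▸ hj))
      · rw [msp_zero]; exact VertexSplittable.top _
      · exact VS_mono (vs_vars p rest hnd) ihsub
      · rw [msp_zero]; exact le_top
    · have hid : {a : Fin n →₀ ℕ | ∃ j, j ∈ w :: rest ∧ p j ∧ a = ee j}
          = {a | ∃ j, j ∈ rest ∧ p j ∧ a = ee j} := by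
        ext a
        simp only [Set.mem_setOf_eq, List.mem_cons]
        constructor
        · rintro ⟨j, (rfl | hj), hpj, rfl⟩
          · exact absurd hpj hpw
          · exact ⟨j, hj, hpj, rfl⟩
        · rintro ⟨j, hj, hpj, rfl⟩
          exact ⟨j, Or.inr hj, hpj, rfl⟩
      rw [hid]
      exact VS_mono (vs_vars p rest hnd) (fun i hi => List.mem_cons_of_mem _ hi)

/-- pairs of non-adjacent vertices of `H` within the list `L` -/
def pairSet {n : ℕ} (H : SimpleGraph (Fin n)) (L : List (Fin n)) : Set (Fin n →₀ ℕ) :=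
  {a | ∃ i j, i ∈ L ∧ j ∈ L ∧ i ≠ j ∧ ¬ H.Adj i j ∧ a = ee i + ee j}

lemma dg_pairSet {H : SimpleGraph (Fin n)} {L : List (Fin n)} :
    ∀ a ∈ pairSet H L, dg a = 2 := by
  rintro _ ⟨i, j, _, _, _, _, rfl⟩
  rw [dg_add, dg_single, dg_single]

lemma vs_pairs (H : SimpleGraph (Fin n)) :
    ∀ (L : List (Fin n)), L.Nodup → peoList H L →
      VertexSplittable {i | i ∈ L} (msp K (pairSet H L))
  | [] => by
    intro _ _
    have : pairSet H ([] : List (Fin n)) = ∅ := by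
      ext a; simp [pairSet]
    rw [this, msp_empty]
    exact VertexSplittable.bot _
  | w :: rest => by
    intro hnd hpeo
    rw [List.nodup_cons] at hnd
    obtain ⟨hw, hnd⟩ := hnd
    obtain ⟨hpw, hpeo'⟩ := hpeo
    have ihsub : {i : Fin n | i ∈ rest} ⊆ {i : Fin n | i ∈ w :: rest} \ {w} := by
      intro i hi
      exact ⟨List.mem_cons_of_mem _ hi, fun he => hw (he ▸ hi)⟩
    set Q : Set (Fin n →₀ ℕ) := {a | ∃ j, j ∈ rest ∧ (¬ H.Adj w j) ∧ a = ee j} with hQ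
    have hid : pairSet H (w :: rest) = ((fun a => ee w + a) '' Q) ∪ pairSet H rest := by
      ext a
      simp only [pairSet, Set.mem_setOf_eq, Set.mem_union, Set.mem_image, List.mem_cons, hQ]
      constructor
      · rintro ⟨i, j, (rfl | hi), (rfl | hj), hne, hnadj, rfl⟩
        · exact absurd rfl hne
        · exact Or.inl ⟨ee j, ⟨j, hj, hnadj, rfl⟩, rfl⟩
        · exact Or.inl ⟨ee i, ⟨i, hi, fun h => hnadj h.symm, rfl⟩, add_comm _ _⟩
        · exact Or.inr ⟨i, j, hi, hj, hne, hnadj, rfl⟩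
      · rintro (⟨_, ⟨j, hj, hnadj, rfl⟩, rfl⟩ | ⟨i, j, hi, hj, hne, hnadj, rfl⟩)
        · exact ⟨w, j, Or.inl rfl, Or.inr hj, fun he => hw (he ▸ hj), hnadj, rfl⟩
        · exact ⟨i, j, Or.inr hi, Or.inr hj, hne, hnadj, rfl⟩
    rw [hid]
    refine vs_split_msp List.mem_cons_self (d := 1) ?_ dg_pairSet ?_ ?_ ?_ ?_
    · rintro _ ⟨j, _, _, rfl⟩
      exact dg_single j 1
    · rintro _ ⟨i, j, hi, hj, _, _, rfl⟩
      have hiw : i ≠ w := fun he => hw (he ▸ hi)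
      have hjw : j ≠ w := fun he => hw (he ▸ hj)
      rw [Finsupp.add_apply, Finsupp.single_eq_of_ne' hiw, Finsupp.single_eq_of_ne' hjw]
      rfl
    · exact VS_mono (vs_vars (fun j => ¬ H.Adj w j) rest hnd) ihsub
    · exact VS_mono (vs_pairs H rest hnd hpeo') ihsub
    · apply msp_le_msp
      rintro _ ⟨i, j, hi, hj, hne, hnadj, rfl⟩
      have key : ¬ H.Adj w i ∨ ¬ H.Adj w j := by
        by_contra hcon
        push_neg at hcon
        exact hnadj (hpw i hi j hj hcon.1 hcon.2 hne)
      rcases key with hk | hk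
      · exact ⟨ee i, ⟨i, hi, hk, rfl⟩, le_self_add⟩
      · exact ⟨ee j, ⟨j, hj, hk, rfl⟩, le_add_self⟩

lemma peoList_append (H : SimpleGraph (Fin n)) (L₂ : List (Fin n)) :
    ∀ (L₁ : List (Fin n)),
      (∀ w ∈ L₁, ∀ j ∈ L₁ ++ L₂, ∀ k ∈ L₁ ++ L₂, H.Adj w j → H.Adj w k → j ≠ k → H.Adj j k) →
      peoList H L₂ → peoList H (L₁ ++ L₂)
  | [] => fun _ h2 => h2
  | w :: L₁ => by
    intro h1 h2
    refine ⟨?_, peoList_append H L₂ L₁ (fun v hv j hj k hk => h1 v (List.mem_cons_of_mem _ hv) j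
      (by rw [List.cons_append]; exact List.mem_cons_of_mem _ hj) k
      (by rw [List.cons_append]; exact List.mem_cons_of_mem _ hk)) h2⟩
    intro j hj k hk
    exact h1 w List.mem_cons_self j
      (by rw [List.cons_append]; exact List.mem_cons_of_mem _ hj) k
      (by rw [List.cons_append]; exact List.mem_cons_of_mem _ hk)

lemma peoList_of_sorted (H : SimpleGraph (Fin n)) :
    ∀ (L : List (Fin n)), List.Pairwise (· < ·) L →
      (∀ w ∈ L, ∀ j ∈ L, ∀ k ∈ L, w < j → w < k → H.Adj w j → H.Adj w k → j ≠ k → H.Adj j k) →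
      peoList H L
  | [] => fun _ _ => trivial
  | w :: L => by
    intro hs h
    rw [List.pairwise_cons] at hs
    refine ⟨fun j hj k hk => h w List.mem_cons_self j (List.mem_cons_of_mem _ hj) k
        (List.mem_cons_of_mem _ hk) (hs.1 j hj) (hs.1 k hk), ?_⟩
    exact peoList_of_sorted H L hs.2 (fun v hv j hj k hk => h v (List.mem_cons_of_mem _ hv) j
      (List.mem_cons_of_mem _ hj) k (List.mem_cons_of_mem _ hk))

/-- the auxiliary graph on the non-neighbourhood complement structure -/
def auxH (G : SimpleGraph (Fin n)) (x : Fin n) : SimpleGraph (Fin n) where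
  Adj i j := G.Adj i j ∧ (G.Adj x i ∨ G.Adj x j)
  symm := ⟨by
    rintro i j ⟨h1, h2⟩
    exact ⟨h1.symm, h2.symm⟩⟩
  loopless := ⟨fun i h => G.loopless.irrefl i h.1⟩

/-- the generating exponents of `HS_1(I(G^c))`, restricted to triples starting at position
`≥ m` -/
def T3 (G : SimpleGraph (Fin n)) (m : ℕ) : Set (Fin n →₀ ℕ) :=
  {a | ∃ i₁ i₂ i₃ : Fin n, m ≤ (i₁ : ℕ) ∧ i₁ < i₂ ∧ i₂ < i₃ ∧
    ((¬ G.Adj i₁ i₂ ∧ ¬ G.Adj i₁ i₃) ∨ ¬ G.Adj i₂ i₃) ∧ a = ee i₁ + ee i₂ + ee i₃}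

lemma dg_T3 {G : SimpleGraph (Fin n)} {m : ℕ} : ∀ a ∈ T3 G m, dg a = 3 := by
  rintro _ ⟨i₁, i₂, i₃, _, _, _, _, rfl⟩
  rw [dg_add, dg_add, dg_single, dg_single, dg_single]

lemma T3_empty {G : SimpleGraph (Fin n)} {m : ℕ} (h : n ≤ m) : T3 G m = ∅ := by
  ext a
  simp only [T3, Set.mem_setOf_eq, Set.mem_empty_iff_false, iff_false, not_exists]
  rintro i₁ i₂ i₃ ⟨h1, _⟩
  exact absurd i₁.isLt (by omega)

lemma vs_T3_step (G : SimpleGraph (Fin n))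
    (peo : ∀ i j k : Fin n, i < j → i < k → G.Adj i j → G.Adj i k → j ≠ k → G.Adj j k)
    (m : ℕ) (x : Fin n) (hvx : (x : ℕ) = m)
    (ih : VertexSplittable {i : Fin n | m + 1 ≤ (i : ℕ)} (msp K (T3 G (m + 1)))) :
    VertexSplittable {i : Fin n | m ≤ (i : ℕ)} (msp K (T3 G m)) := by
    classical
    set Mx := (List.finRange n).filter (fun j => decide (x < j ∧ ¬ G.Adj x j)) with hMx
    set Nx := (List.finRange n).filter (fun j => decide (x < j ∧ G.Adj x j)) with hNx
    set Lx := Mx ++ Nx with hLx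
    have memM : ∀ j : Fin n, j ∈ Mx ↔ (x < j ∧ ¬ G.Adj x j) := by
      intro j
      rw [hMx, List.mem_filter]
      simp [List.mem_finRange]
    have memN : ∀ j : Fin n, j ∈ Nx ↔ (x < j ∧ G.Adj x j) := by
      intro j
      rw [hNx, List.mem_filter]
      simp [List.mem_finRange]
    have memL : ∀ j : Fin n, j ∈ Lx ↔ x < j := by
      intro j
      rw [hLx, List.mem_append, memM, memN]
      by_cases hA : G.Adj x j
      · tauto
      · tauto
    have nodupL : Lx.Nodup := by
      refine List.Nodup.append ((List.nodup_finRange n).filter _)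
        ((List.nodup_finRange n).filter _) ?_
      intro j hjM hjN
      rw [memM] at hjM
      rw [memN] at hjN
      exact hjM.2 hjN.2
    have peoL : peoList (auxH G x) Lx := by
      refine peoList_append _ _ _ ?_ ?_
      · intro w hw j hj k hk hwj hwk hjk
        rw [memM] at hw
        rw [← hLx] at hj hk
        have hj' : x < j := (memL j).mp hj
        have hk' : x < k := (memL k).mp hk
        have hAxj : G.Adj x j := hwj.2.resolve_left hw.2
        have hAxk : G.Adj x k := hwk.2.resolve_left hw.2
        exact ⟨peo x j k hj' hk' hAxj hAxk hjk, Or.inl hAxj⟩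
      · refine peoList_of_sorted _ _ ((List.pairwise_lt_finRange n).filter _) ?_
        intro w hw j hj k hk hwj hwk hAwj hAwk hjk
        rw [memN] at hj hk
        exact ⟨peo w j k hwj hwk hAwj.1 hAwk.1 hjk, Or.inl hj.2⟩
    have hid : T3 G m = ((fun a => ee x + a) '' pairSet (auxH G x) Lx) ∪ T3 G (m + 1) := by
      ext a
      simp only [T3, pairSet, Set.mem_setOf_eq, Set.mem_union, Set.mem_image]
      constructor
      · rintro ⟨i₁, i₂, i₃, hm1, h12, h23, hc, rfl⟩
        rcases eq_or_lt_of_le hm1 with he | hlt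
        · have hx1 : i₁ = x := Fin.ext (he.symm.trans hvx.symm)
          subst hx1
          refine Or.inl ⟨ee i₂ + ee i₃, ⟨i₂, i₃, (memL i₂).mpr h12,
            (memL i₃).mpr (h12.trans h23), h23.ne, ?_, rfl⟩, (add_assoc _ _ _).symm⟩
          rintro ⟨hA, hO⟩
          rcases hc with ⟨h1, h2⟩ | h3
          · rcases hO with h | h
            · exact h1 h
            · exact h2 h
          · exact h3 hA
        · exact Or.inr ⟨i₁, i₂, i₃, by omega, h12, h23, hc, rfl⟩
      · rintro (⟨_, ⟨i, j, hi, hj, hne, hnadj, rfl⟩, rfl⟩ | ⟨i₁, i₂, i₃, hm1, h12, h23, hc, rfl⟩)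
        · have hxi : x < i := (memL i).mp hi
          have hxj : x < j := (memL j).mp hj
          have hcond : ∀ u v : Fin n, ¬ (auxH G x).Adj u v →
              ((¬ G.Adj x u ∧ ¬ G.Adj x v) ∨ ¬ G.Adj u v) := by
            intro u v huv
            by_cases hA : G.Adj u v
            · refine Or.inl ⟨fun h => huv ⟨hA, Or.inl h⟩, fun h => huv ⟨hA, Or.inr h⟩⟩
            · exact Or.inr hA
          rcases lt_or_gt_of_ne hne with hij | hij
          · exact ⟨x, i, j, hvx.ge, hxi, hij, hcond i j hnadj,
              (add_assoc _ _ _).symm⟩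
          · refine ⟨x, j, i, hvx.ge, hxj, hij, hcond j i
              (fun hh => hnadj ((auxH G x).symm.symm _ _ hh)), ?_⟩
            rw [add_assoc, add_comm (ee i) (ee j)]
        · exact ⟨i₁, i₂, i₃, by omega, h12, h23, hc, rfl⟩
    rw [hid]
    refine vs_split_msp (x := x) (d := 2) (show x ∈ {i : Fin n | m ≤ (i : ℕ)} from hvx.ge) dg_pairSet
      (fun a ha => dg_T3 a ha) ?_ ?_ ?_ ?_
    · rintro _ ⟨i₁, i₂, i₃, hm1, h12, h23, _, rfl⟩
      have h1 : i₁ ≠ x := fun he => by rw [he, hvx] at hm1; omega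
      have h2 : i₂ ≠ x := fun he => by
        rw [he] at h12
        have h5 : (i₁ : ℕ) < (x : ℕ) := h12
        rw [hvx] at h5
        omega
      have h3 : i₃ ≠ x := fun he => by
        rw [he] at h23
        have h5 : (i₂ : ℕ) < (x : ℕ) := h23
        have h6 : (i₁ : ℕ) < (i₂ : ℕ) := h12
        rw [hvx] at h5
        omega
      rw [Finsupp.add_apply, Finsupp.add_apply, Finsupp.single_eq_of_ne' h1,
        Finsupp.single_eq_of_ne' h2, Finsupp.single_eq_of_ne' h3]
      rfl
    · refine VS_mono (vs_pairs (auxH G x) Lx nodupL peoL) ?_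
      intro i hi
      have hxi : x < i := (memL i).mp hi
      have hxi' : (x : ℕ) < (i : ℕ) := hxi
      refine ⟨by simp only [Set.mem_setOf_eq]; omega, fun he => ?_⟩
      rw [Set.mem_singleton_iff] at he
      exact absurd (he ▸ hxi) (lt_irrefl x)
    · refine VS_mono ih ?_
      intro i hi
      simp only [Set.mem_setOf_eq] at hi
      refine ⟨by simp only [Set.mem_setOf_eq]; omega, fun he => ?_⟩
      rw [Set.mem_singleton_iff] at he
      rw [he, hvx] at hi
      omega
    · apply msp_le_msp
      rintro _ ⟨i₁, i₂, i₃, hm1, h12, h23, hc, rfl⟩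
      have hx1 : x < i₁ := by
        rw [Fin.lt_def, hvx]
        omega
      rcases hc with ⟨h1, _⟩ | h3
      · exact ⟨ee i₁ + ee i₂, ⟨i₁, i₂, (memL _).mpr hx1, (memL _).mpr (hx1.trans h12),
          h12.ne, fun hh => h1 hh.1, rfl⟩, le_self_add⟩
      · refine ⟨ee i₂ + ee i₃, ⟨i₂, i₃, (memL _).mpr (hx1.trans h12),
          (memL _).mpr ((hx1.trans h12).trans h23), h23.ne, fun hh => h3 hh.1, rfl⟩, ?_⟩
        rw [add_assoc]
        exact le_add_self

lemma vs_T3 (G : SimpleGraph (Fin n))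
    (peo : ∀ i j k : Fin n, i < j → i < k → G.Adj i j → G.Adj i k → j ≠ k → G.Adj j k) :
    ∀ (k m : ℕ), n ≤ m + k → VertexSplittable {i : Fin n | m ≤ (i : ℕ)} (msp K (T3 G m))
  | 0, m, h => by
    rw [T3_empty (by omega), msp_empty]
    exact VertexSplittable.bot _
  | k + 1, m, h => by
    by_cases hmn : n ≤ m
    · rw [T3_empty hmn, msp_empty]
      exact VertexSplittable.bot _
    push_neg at hmn
    exact vs_T3_step G peo m ⟨m, hmn⟩ rfl (vs_T3 G peo k (m + 1) (by omega))

end Infra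

/-- let `1, …, n` be a perfect elimination ordering of the (chordal) graph `G` and
let `L = HS_1(I(G^c))` be the ideal generated by all squarefree monomials `x_{i_1} x_{i_2} x_{i_3}`
with `i_1 < i_2 < i_3` such that either `{i_1,i_2} ∉ E(G)` and `{i_1,i_3} ∉ E(G)`, or
`{i_2,i_3} ∉ E(G)`. Then `L` is vertex splittable; in particular `L` has linear quotients. -/
theorem stmt_17 {K : Type*} [Field K] {n : ℕ} (G : SimpleGraph (Fin n))
    (peo : ∀ i j k : Fin n, i < j → i < k → G.Adj i j → G.Adj i k → j ≠ k → G.Adj j k) :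
    VertexSplittable Set.univ
      (Ideal.span {p : MvPolynomial (Fin n) K | ∃ i₁ i₂ i₃ : Fin n, i₁ < i₂ ∧ i₂ < i₃ ∧
        ((¬ G.Adj i₁ i₂ ∧ ¬ G.Adj i₁ i₃) ∨ ¬ G.Adj i₂ i₃) ∧
        p = monomial (Finsupp.single i₁ 1 + Finsupp.single i₂ 1 + Finsupp.single i₃ 1) 1}) ∧
    HasLinearQuotients
      (Ideal.span {p : MvPolynomial (Fin n) K | ∃ i₁ i₂ i₃ : Fin n, i₁ < i₂ ∧ i₂ < i₃ ∧
        ((¬ G.Adj i₁ i₂ ∧ ¬ G.Adj i₁ i₃) ∨ ¬ G.Adj i₂ i₃) ∧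
        p = monomial (Finsupp.single i₁ 1 + Finsupp.single i₂ 1 + Finsupp.single i₃ 1) 1}) := by
  have hset : Ideal.span {p : MvPolynomial (Fin n) K | ∃ i₁ i₂ i₃ : Fin n, i₁ < i₂ ∧ i₂ < i₃ ∧
      ((¬ G.Adj i₁ i₂ ∧ ¬ G.Adj i₁ i₃) ∨ ¬ G.Adj i₂ i₃) ∧
      p = monomial (Finsupp.single i₁ 1 + Finsupp.single i₂ 1 + Finsupp.single i₃ 1) 1}
      = msp K (T3 G 0) := by
    rw [msp]
    congr 1
    ext p
    simp only [Set.mem_setOf_eq, Set.mem_image, T3]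
    constructor
    · rintro ⟨i₁, i₂, i₃, h12, h23, hc, rfl⟩
      exact ⟨_, ⟨i₁, i₂, i₃, Nat.zero_le _, h12, h23, hc, rfl⟩, rfl⟩
    · rintro ⟨_, ⟨i₁, i₂, i₃, _, h12, h23, hc, rfl⟩, rfl⟩
      exact ⟨i₁, i₂, i₃, h12, h23, hc, rfl⟩
  have hVS : VertexSplittable Set.univ (msp K (T3 G 0)) :=
    VS_mono (vs_T3 G peo n 0 (by omega)) (fun i _ => trivial)
  rw [hset]
  exact ⟨hVS, (vs_hlq hVS).2.2⟩
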